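/- If A : H → 2^H is α‖C‖²-strongly monotone (with α > 0) and zer A ≠ ∅, where M = C C* is an admissible preconditioner for A, then the reduced resolvent T̃ = (I + C* ▷ A)⁻¹ is a contraction with factor 1/(1+α). -/

import Mathlib

/-- If `A` is `α‖C‖²`-strongly monotone with `α > 0` and has a zero, then the reduced
resolvent `T̃ = C* (M+A)⁻¹ C` is a contraction with factor `1/(1+α)`. -/
theorem stmt16 {H D : Type} [NormedAddCommGroup H] [InnerProductSpace ℝ H] [CompleteSpace H]
    [NormedAddCommGroup D] [InnerProductSpace ℝ D] [CompleteSpace D]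
    (A : Set (H × H)) (M : H →L[ℝ] H) (C : D →L[ℝ] H) (α : ℝ) (hα : 0 < α)
    (hC : Function.Injective C)
    (hCsurj : Function.Surjective (ContinuousLinearMap.adjoint C))
    (hM : M = C ∘L (ContinuousLinearMap.adjoint C))
    -- `J = (M+A)⁻¹`, single-valued with full domain (admissibility)
    (J : H → H)
    (hJ : ∀ v : H, (J v, v - M (J v)) ∈ A)
    (hJuniq : ∀ v w : H, (w, v - M w) ∈ A → w = J v)
    -- `A` is `α‖C‖²`-strongly monotone
    (hstrong : ∀ p ∈ A, ∀ q ∈ A,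
        α * ‖C‖ ^ 2 * ‖p.1 - q.1‖ ^ 2 ≤ (inner ℝ (p.2 - q.2) (p.1 - q.1) : ℝ))
    -- `zer A ≠ ∅`
    (hzer : ∃ x : H, (x, (0 : H)) ∈ A) :
    ∀ w₁ w₂ : D,
      ‖(ContinuousLinearMap.adjoint C) (J (C w₁))
          - (ContinuousLinearMap.adjoint C) (J (C w₂))‖
        ≤ (1 / (1 + α)) * ‖w₁ - w₂‖ := by
  intro w₁ w₂
  set u₁ := J (C w₁) with hu₁
  set u₂ := J (C w₂) with hu₂
  set Cs := ContinuousLinearMap.adjoint C with hCs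
  set z := Cs u₁ - Cs u₂ with hz
  have hzCs : z = Cs (u₁ - u₂) := by rw [hz, map_sub]
  -- strong monotonicity applied to the two resolvent points
  have h1 := hstrong (u₁, C w₁ - M u₁) (hJ (C w₁)) (u₂, C w₂ - M u₂) (hJ (C w₂))
  simp only at h1
  -- rewrite the inner product
  have hinner : (inner ℝ ((C w₁ - M u₁) - (C w₂ - M u₂)) (u₁ - u₂) : ℝ)
      = inner ℝ (w₁ - w₂) z - ‖z‖ ^ 2 := by
    have : (C w₁ - M u₁) - (C w₂ - M u₂) = C (w₁ - w₂) - C (Cs (u₁ - u₂)) := by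
      rw [hM]; simp [hCs, map_sub]; abel
    rw [this, inner_sub_left, ← ContinuousLinearMap.adjoint_inner_right,
      ← ContinuousLinearMap.adjoint_inner_right, ← hCs, ← hzCs, real_inner_self_eq_norm_sq]
  rw [hinner] at h1
  -- ‖z‖ ≤ ‖C‖ * ‖u₁ - u₂‖
  have hznorm : ‖z‖ ≤ ‖C‖ * ‖u₁ - u₂‖ := by
    calc ‖z‖ = ‖Cs (u₁ - u₂)‖ := by rw [hzCs]
    _ ≤ ‖Cs‖ * ‖u₁ - u₂‖ := Cs.le_opNorm _
    _ = ‖C‖ * ‖u₁ - u₂‖ := by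
        rw [hCs, LinearIsometryEquiv.norm_map]
  have hz2 : α * ‖z‖ ^ 2 ≤ α * ‖C‖ ^ 2 * ‖u₁ - u₂‖ ^ 2 := by
    have : ‖z‖ ^ 2 ≤ (‖C‖ * ‖u₁ - u₂‖) ^ 2 :=
      pow_le_pow_left₀ (norm_nonneg _) hznorm 2
    nlinarith
  have hkey : (1 + α) * ‖z‖ ^ 2 ≤ ‖w₁ - w₂‖ * ‖z‖ := by
    have := real_inner_le_norm (w₁ - w₂) z
    nlinarith
  rcases eq_or_lt_of_le (norm_nonneg z) with h0 | h0
  · rw [← h0]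
    positivity
  · have h1α : 0 < 1 + α := by linarith
    rw [div_mul_eq_mul_div, le_div_iff₀ h1α]
    nlinarith [hkey, h0]
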